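/- Let E be the set of even numbers. For any permutation π of ℕ, the set of x ∈ 2^ℕ (identified with subsets of ℕ) such that limsup_n |π[φ(x)] ∩ [0,n)|/n ≥ 1/2 and liminf_n |π[φ(x)] ∩ [0,n)|/n ≤ 1/2 is comeager in 2^ℕ, where φ(x) ⊆ ℕ is defined by: 2n ∈ φ(x) iff x(n)=1, and 2n+1 ∈ φ(x) iff x(n)=0. -/

import Mathlib

open Filter Topology

open scoped Classical in
noncomputable def cnt (A : Set ℕ) (n : ℕ) : ℕ :=
  ((Finset.range n).filter (fun m => m ∈ A)).card

open scoped Classical in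
noncomputable def cntIn (A : Set ℕ) (a b : ℕ) : ℕ :=
  ((Finset.Ico a b).filter (fun m => m ∈ A)).card

def dens (A : Set ℕ) (r : ℝ) : Prop :=
  Tendsto (fun n => (cnt A n : ℝ) / n) atTop (𝓝 r)

def phi (x : ℕ → Bool) : Set ℕ :=
  {m | (m % 2 = 0 ∧ x (m / 2) = true) ∨ (m % 2 = 1 ∧ x (m / 2) = false)}

namespace Stmt10Aux

def p (j : ℕ) : ℕ := if j % 2 = 0 then j + 1 else j - 1

lemma p_p (j : ℕ) : p (p j) = j := by unfold p; split_ifs <;> omega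

lemma p_inj : Function.Injective p := fun a b h => by
  have := congrArg p h; rwa [p_p, p_p] at this

lemma even_mem (y : ℕ → Bool) (i : ℕ) : (2*i) ∈ phi y ↔ y i = true := by
  have h1 : (2*i) % 2 = 0 := by omega
  have h2 : (2*i) / 2 = i := by omega
  simp [phi, h1, h2]

lemma odd_mem (y : ℕ → Bool) (i : ℕ) : (2*i+1) ∈ phi y ↔ y i = false := by
  have h1 : (2*i+1) % 2 = 1 := by omega
  have h2 : (2*i+1) / 2 = i := by omega
  simp [phi, h1, h2]

lemma p_even (i : ℕ) : p (2*i) = 2*i+1 := by unfold p; split_ifs <;> omega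
lemma p_odd (i : ℕ) : p (2*i+1) = 2*i := by unfold p; split_ifs <;> omega

open scoped Classical in
lemma cnt_image (π : Equiv.Perm ℕ) (A : Set ℕ) (n : ℕ) :
    cnt (π '' A) n = ((Finset.range n).filter (fun m => π.symm m ∈ A)).card := by
  unfold cnt
  congr 1
  apply Finset.filter_congr
  intro m _
  simp [Equiv.image_eq_preimage_symm]

lemma cnt_le (A : Set ℕ) (n : ℕ) : cnt A n ≤ n := by
  classical
  unfold cnt
  exact (Finset.card_filter_le _ _).trans_eq (Finset.card_range n)

open scoped Classical in
lemma lower (π : Equiv.Perm ℕ) (y : ℕ → Bool) (M : ℕ)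
    (hy : ∀ i, M ≤ i → (y i = true ↔ π (2*i) < π (2*i+1))) (n : ℕ) :
    n ≤ 2 * cnt (π '' phi y) n + 2 * M := by
  set C := (Finset.range n).filter (fun m => π.symm m ∈ phi y) with hC
  set D := (Finset.range n).filter (fun m => ¬ π.symm m ∈ phi y) with hD
  have hcnt : cnt (π '' phi y) n = C.card := cnt_image π (phi y) n
  have hCD : C.card + D.card = n := by
    rw [hC, hD, Finset.card_filter_add_card_filter_not, Finset.card_range]
  set D1 := D.filter (fun m => M ≤ π.symm m / 2) with hD1def
  set D2 := D.filter (fun m => ¬ M ≤ π.symm m / 2) with hD2def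
  have hD12 : D1.card + D2.card = D.card := by
    rw [hD1def, hD2def, Finset.card_filter_add_card_filter_not]
  have hD2 : D2.card ≤ 2 * M := by
    have := Finset.card_le_card_of_injOn
      (f := fun m => π.symm m) (s := D2) (t := Finset.range (2*M)) ?_ ?_
    · simpa using this
    · intro m hm
      rw [hD2def, Finset.mem_coe, Finset.mem_filter] at hm
      simp only [Finset.mem_coe, Finset.mem_range]
      omega
    · exact fun a _ b _ h => π.symm.injective h
  have hD1C : D1.card ≤ C.card := by
    apply Finset.card_le_card_of_injOn (fun m => π (p (π.symm m)))
    · intro m hm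
      rw [hD1def, Finset.mem_coe, Finset.mem_filter] at hm
      obtain ⟨hmD, hmi⟩ := hm
      rw [hD, Finset.mem_filter, Finset.mem_range] at hmD
      obtain ⟨hmn, hmp⟩ := hmD
      set j := π.symm m with hj
      have hjm : π j = m := π.apply_symm_apply m
      obtain ⟨i, hji⟩ : ∃ i, j = 2*i ∨ j = 2*i+1 := ⟨j/2, by omega⟩
      have hiM : M ≤ i := by omega
      have hyi := hy i hiM
      have hne : π (2*i) ≠ π (2*i+1) := fun hh => by have := π.injective hh; omega
      have key : p j ∈ phi y ∧ π (p j) < π j := by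
        rcases hji with h | h
        · have hyf : y i = false := by
            rcases Bool.eq_false_or_eq_true (y i) with h' | h'
            · exact absurd (h ▸ (even_mem y i).mpr h') hmp
            · exact h'
          have hlt : ¬ π (2*i) < π (2*i+1) := by
            rw [← hyi]; simp [hyf]
          refine ⟨?_, ?_⟩
          · rw [h, p_even]; exact (odd_mem y i).mpr hyf
          · rw [h, p_even]
            have := hne
            omega
        · have hyt : y i = true := by
            rcases Bool.eq_false_or_eq_true (y i) with h' | h'
            · exact h'
            · exact absurd (h ▸ (odd_mem y i).mpr h') hmp
          have hlt : π (2*i) < π (2*i+1) := hyi.mp hyt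
          refine ⟨?_, ?_⟩
          · rw [h, p_odd]; exact (even_mem y i).mpr hyt
          · rw [h, p_odd]; omega
      rw [hC, Finset.mem_coe, Finset.mem_filter, Finset.mem_range]
      constructor
      · calc π (p j) < π j := key.2
          _ = m := hjm
          _ < n := hmn
      · rw [Equiv.symm_apply_apply]; exact key.1
    · intro a _ b _ h
      have h1 : p (π.symm a) = p (π.symm b) := π.injective h
      have h2 : π.symm a = π.symm b := p_inj h1
      exact π.symm.injective h2
  omega

open scoped Classical in
lemma upper (π : Equiv.Perm ℕ) (y : ℕ → Bool) (M : ℕ)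
    (hy : ∀ i, M ≤ i → (y i = true ↔ π (2*i+1) < π (2*i))) (n : ℕ) :
    2 * cnt (π '' phi y) n ≤ n + 2 * M := by
  set C := (Finset.range n).filter (fun m => π.symm m ∈ phi y) with hC
  set D := (Finset.range n).filter (fun m => ¬ π.symm m ∈ phi y) with hD
  have hcnt : cnt (π '' phi y) n = C.card := cnt_image π (phi y) n
  have hCD : C.card + D.card = n := by
    rw [hC, hD, Finset.card_filter_add_card_filter_not, Finset.card_range]
  set C1 := C.filter (fun m => M ≤ π.symm m / 2) with hC1def
  set C2 := C.filter (fun m => ¬ M ≤ π.symm m / 2) with hC2def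
  have hC12 : C1.card + C2.card = C.card := by
    rw [hC1def, hC2def, Finset.card_filter_add_card_filter_not]
  have hC2 : C2.card ≤ 2 * M := by
    have := Finset.card_le_card_of_injOn
      (f := fun m => π.symm m) (s := C2) (t := Finset.range (2*M)) ?_ ?_
    · simpa using this
    · intro m hm
      rw [hC2def, Finset.mem_coe, Finset.mem_filter] at hm
      simp only [Finset.mem_coe, Finset.mem_range]
      omega
    · exact fun a _ b _ h => π.symm.injective h
  have hC1D : C1.card ≤ D.card := by
    apply Finset.card_le_card_of_injOn (fun m => π (p (π.symm m)))
    · intro m hm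
      rw [hC1def, Finset.mem_coe, Finset.mem_filter] at hm
      obtain ⟨hmC, hmi⟩ := hm
      rw [hC, Finset.mem_filter, Finset.mem_range] at hmC
      obtain ⟨hmn, hmp⟩ := hmC
      set j := π.symm m with hj
      have hjm : π j = m := π.apply_symm_apply m
      obtain ⟨i, hji⟩ : ∃ i, j = 2*i ∨ j = 2*i+1 := ⟨j/2, by omega⟩
      have hiM : M ≤ i := by omega
      have hyi := hy i hiM
      have hne : π (2*i) ≠ π (2*i+1) := fun hh => by have := π.injective hh; omega
      have key : ¬ p j ∈ phi y ∧ π (p j) < π j := by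
        rcases hji with h | h
        · have hyt : y i = true := by
            rw [h, even_mem] at hmp; exact hmp
          have hlt : π (2*i+1) < π (2*i) := hyi.mp hyt
          refine ⟨?_, ?_⟩
          · rw [h, p_even, odd_mem]; simp [hyt]
          · rw [h, p_even]; omega
        · have hyf : y i = false := by
            rw [h, odd_mem] at hmp; exact hmp
          have hlt : ¬ π (2*i+1) < π (2*i) := by
            rw [← hyi]; simp [hyf]
          refine ⟨?_, ?_⟩
          · rw [h, p_odd, even_mem]; simp [hyf]
          · rw [h, p_odd]
            have := hne
            omega
      rw [hD, Finset.mem_coe, Finset.mem_filter, Finset.mem_range]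
      constructor
      · calc π (p j) < π j := key.2
          _ = m := hjm
          _ < n := hmn
      · rw [Equiv.symm_apply_apply]; exact key.1
    · intro a _ b _ h
      have h1 : p (π.symm a) = p (π.symm b) := π.injective h
      have h2 : π.symm a = π.symm b := p_inj h1
      exact π.symm.injective h2
  omega

lemma continuous_cnt (π : Equiv.Perm ℕ) (n : ℕ) :
    Continuous (fun x : ℕ → Bool => cnt (π '' phi x) n) := by
  classical
  have he : (fun x : ℕ → Bool => cnt (π '' phi x) n)
      = fun x => ∑ m ∈ Finset.range n, if π.symm m ∈ phi x then 1 else 0 := by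
    funext x; rw [cnt_image, Finset.card_filter]
  rw [he]
  apply continuous_finset_sum
  intro m _
  have he2 : (fun x : ℕ → Bool => if π.symm m ∈ phi x then (1:ℕ) else 0)
      = (fun b : Bool => if (π.symm m % 2 = 0 ∧ b = true) ∨ (π.symm m % 2 = 1 ∧ b = false)
          then (1:ℕ) else 0) ∘ (fun x : ℕ → Bool => x (π.symm m / 2)) := by
    funext x
    simp only [Function.comp]
    by_cases h : π.symm m ∈ phi x
    · have h' : (π.symm m % 2 = 0 ∧ x (π.symm m / 2) = true) ∨
        (π.symm m % 2 = 1 ∧ x (π.symm m / 2) = false) := h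
      rw [if_pos h, if_pos h']
    · have h' : ¬ ((π.symm m % 2 = 0 ∧ x (π.symm m / 2) = true) ∨
        (π.symm m % 2 = 1 ∧ x (π.symm m / 2) = false)) := h
      rw [if_neg h, if_neg h']
  rw [he2]
  exact Continuous.comp (continuous_of_discreteTopology) (continuous_apply _)

noncomputable def U (π : Equiv.Perm ℕ) (N : ℕ) : Set (ℕ → Bool) :=
  ⋃ n, ⋃ (_ : N ≤ n),
    {x | (1:ℝ)/2 - 1/(N+1) ≤ (cnt (π '' phi x) n : ℝ)/n}

noncomputable def L (π : Equiv.Perm ℕ) (N : ℕ) : Set (ℕ → Bool) :=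
  ⋃ n, ⋃ (_ : N ≤ n),
    {x | (cnt (π '' phi x) n : ℝ)/n ≤ (1:ℝ)/2 + 1/(N+1)}

lemma mem_U (π : Equiv.Perm ℕ) (N : ℕ) (x : ℕ → Bool) :
    x ∈ U π N ↔ ∃ n, N ≤ n ∧ (1:ℝ)/2 - 1/(N+1) ≤ (cnt (π '' phi x) n : ℝ)/n := by
  simp [U]

lemma mem_L (π : Equiv.Perm ℕ) (N : ℕ) (x : ℕ → Bool) :
    x ∈ L π N ↔ ∃ n, N ≤ n ∧ (cnt (π '' phi x) n : ℝ)/n ≤ (1:ℝ)/2 + 1/(N+1) := by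
  simp [L]

lemma isOpen_U (π : Equiv.Perm ℕ) (N : ℕ) : IsOpen (U π N) := by
  refine isOpen_iUnion fun n => isOpen_iUnion fun _ => ?_
  have : {x : ℕ → Bool | (1:ℝ)/2 - 1/(N+1) ≤ (cnt (π '' phi x) n : ℝ)/n}
      = (fun x : ℕ → Bool => cnt (π '' phi x) n) ⁻¹'
        {k : ℕ | (1:ℝ)/2 - 1/(N+1) ≤ (k:ℝ)/n} := rfl
  rw [this]
  exact (isOpen_discrete _).preimage (continuous_cnt π n)

lemma isOpen_L (π : Equiv.Perm ℕ) (N : ℕ) : IsOpen (L π N) := by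
  refine isOpen_iUnion fun n => isOpen_iUnion fun _ => ?_
  have : {x : ℕ → Bool | (cnt (π '' phi x) n : ℝ)/n ≤ (1:ℝ)/2 + 1/(N+1)}
      = (fun x : ℕ → Bool => cnt (π '' phi x) n) ⁻¹'
        {k : ℕ | (k:ℝ)/n ≤ (1:ℝ)/2 + 1/(N+1)} := rfl
  rw [this]
  exact (isOpen_discrete _).preimage (continuous_cnt π n)

lemma ratio_lower (c n M N : ℕ) (hnat : n ≤ 2 * c + 2 * M) (hMn : M * (N+1) ≤ n)
    (hn : 0 < n) : (1:ℝ)/2 - 1/(N+1) ≤ (c:ℝ)/n := by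
  have h1 : (n:ℝ) ≤ 2*(c:ℝ) + 2*(M:ℝ) := by exact_mod_cast hnat
  have h2 : (M:ℝ) * ((N:ℝ)+1) ≤ (n:ℝ) := by exact_mod_cast hMn
  have hnr : (0:ℝ) < (n:ℝ) := by exact_mod_cast hn
  have hN : (0:ℝ) < (N:ℝ)+1 := by positivity
  rw [le_div_iff₀ hnr]
  have h3 : (M:ℝ) ≤ (n:ℝ)/((N:ℝ)+1) := by rw [le_div_iff₀ hN]; exact h2
  have h4 : ((1:ℝ)/2 - 1/((N:ℝ)+1)) * (n:ℝ) = (n:ℝ)/2 - (n:ℝ)/((N:ℝ)+1) := by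
    field_simp
  rw [h4]
  linarith

lemma ratio_upper (c n M N : ℕ) (hnat : 2 * c ≤ n + 2 * M) (hMn : M * (N+1) ≤ n)
    (hn : 0 < n) : (c:ℝ)/n ≤ (1:ℝ)/2 + 1/(N+1) := by
  have h1 : 2*(c:ℝ) ≤ (n:ℝ) + 2*(M:ℝ) := by exact_mod_cast hnat
  have h2 : (M:ℝ) * ((N:ℝ)+1) ≤ (n:ℝ) := by exact_mod_cast hMn
  have hnr : (0:ℝ) < (n:ℝ) := by exact_mod_cast hn
  have hN : (0:ℝ) < (N:ℝ)+1 := by positivity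
  rw [div_le_iff₀ hnr]
  have h3 : (M:ℝ) ≤ (n:ℝ)/((N:ℝ)+1) := by rw [le_div_iff₀ hN]; exact h2
  have h4 : ((1:ℝ)/2 + 1/((N:ℝ)+1)) * (n:ℝ) = (n:ℝ)/2 + (n:ℝ)/((N:ℝ)+1) := by
    field_simp
  rw [h4]
  linarith

lemma dense_U (π : Equiv.Perm ℕ) (N : ℕ) : Dense (U π N) := by
  intro x
  set y : ℕ → (ℕ → Bool) :=
    fun M i => if i < M then x i else decide (π (2*i) < π (2*i+1)) with hy
  have hmem : ∀ M, y M ∈ U π N := by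
    intro M
    rw [mem_U]
    refine ⟨M*(N+1)+N+1, by omega, ?_⟩
    have hcond : ∀ i, M ≤ i → (y M i = true ↔ π (2*i) < π (2*i+1)) := by
      intro i hi
      simp [hy, Nat.not_lt.mpr hi]
    exact ratio_lower _ _ M N (lower π (y M) M hcond _) (by omega) (by omega)
  have htend : Tendsto y atTop (𝓝 x) := by
    rw [tendsto_pi_nhds]
    intro i
    apply tendsto_const_nhds.congr'
    filter_upwards [eventually_ge_atTop (i+1)] with M hM
    simp [hy, show i < M by omega]
  exact mem_closure_of_tendsto htend (Eventually.of_forall hmem)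

lemma dense_L (π : Equiv.Perm ℕ) (N : ℕ) : Dense (L π N) := by
  intro x
  set y : ℕ → (ℕ → Bool) :=
    fun M i => if i < M then x i else decide (π (2*i+1) < π (2*i)) with hy
  have hmem : ∀ M, y M ∈ L π N := by
    intro M
    rw [mem_L]
    refine ⟨M*(N+1)+N+1, by omega, ?_⟩
    have hcond : ∀ i, M ≤ i → (y M i = true ↔ π (2*i+1) < π (2*i)) := by
      intro i hi
      simp [hy, Nat.not_lt.mpr hi]
    exact ratio_upper _ _ M N (upper π (y M) M hcond _) (by omega) (by omega)
  have htend : Tendsto y atTop (𝓝 x) := by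
    rw [tendsto_pi_nhds]
    intro i
    apply tendsto_const_nhds.congr'
    filter_upwards [eventually_ge_atTop (i+1)] with M hM
    simp [hy, show i < M by omega]
  exact mem_closure_of_tendsto htend (Eventually.of_forall hmem)

end Stmt10Aux

open Stmt10Aux in
theorem stmt10 (π : Equiv.Perm ℕ) :
    {x : ℕ → Bool |
      (1 : ℝ) / 2 ≤ Filter.limsup (fun n => (cnt (π '' phi x) n : ℝ) / n) atTop ∧
      Filter.liminf (fun n => (cnt (π '' phi x) n : ℝ) / n) atTop ≤ (1 : ℝ) / 2} ∈
      residual (ℕ → Bool) := by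
  have h : (⋂ N, U π N ∩ L π N) ∈ residual (ℕ → Bool) := by
    rw [countable_iInter_mem]
    intro N
    exact Filter.inter_mem (residual_of_dense_open (isOpen_U π N) (dense_U π N))
      (residual_of_dense_open (isOpen_L π N) (dense_L π N))
  refine Filter.mem_of_superset h ?_
  intro x hx
  simp only [Set.mem_iInter, Set.mem_inter_iff] at hx
  have hb1 : IsBoundedUnder (· ≤ ·) atTop (fun n => (cnt (π '' phi x) n : ℝ) / n) := by
    refine isBoundedUnder_of ⟨1, fun n => ?_⟩
    rcases Nat.eq_zero_or_pos n with h0 | h0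
    · simp [h0]
    · rw [div_le_one (by exact_mod_cast h0)]
      exact_mod_cast cnt_le (π '' phi x) n
  have hb2 : IsBoundedUnder (· ≥ ·) atTop (fun n => (cnt (π '' phi x) n : ℝ) / n) := by
    refine isBoundedUnder_of ⟨0, fun n => ?_⟩
    positivity
  constructor
  · rcases le_or_gt ((1:ℝ)/2) (limsup (fun n => (cnt (π '' phi x) n : ℝ) / n) atTop) with h' | h'
    · exact h'
    · exfalso
      set Lv := limsup (fun n => (cnt (π '' phi x) n : ℝ) / n) atTop with hLv
      have key : ∀ ε : ℝ, 0 < ε → 1/2 - ε ≤ Lv := by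
        intro ε hε
        refine le_limsup_of_frequently_le ?_ hb1
        rw [frequently_atTop]
        intro b
        set N := b + ⌈ε⁻¹⌉₊ with hN
        obtain ⟨n, hn, hfn⟩ := (mem_U π N x).mp (hx N).1
        refine ⟨n, by omega, ?_⟩
        have h5 : ε⁻¹ ≤ (N:ℝ)+1 := by
          refine (Nat.le_ceil _).trans ?_
          have : (⌈ε⁻¹⌉₊ : ℝ) ≤ (N:ℝ) := by exact_mod_cast Nat.le_add_left _ _
          linarith
        have h6 : 1/((N:ℝ)+1) ≤ ε := by
          rw [div_le_iff₀ (by positivity)]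
          calc (1:ℝ) = ε * ε⁻¹ := (mul_inv_cancel₀ hε.ne').symm
            _ ≤ ε * ((N:ℝ)+1) := mul_le_mul_of_nonneg_left h5 hε.le
        linarith
      have := key (((1:ℝ)/2 - Lv)/2) (by linarith)
      linarith
  · rcases le_or_gt (liminf (fun n => (cnt (π '' phi x) n : ℝ) / n) atTop) ((1:ℝ)/2) with h' | h'
    · exact h'
    · exfalso
      set Lv := liminf (fun n => (cnt (π '' phi x) n : ℝ) / n) atTop with hLv
      have key : ∀ ε : ℝ, 0 < ε → Lv ≤ 1/2 + ε := by
        intro ε hε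
        refine liminf_le_of_frequently_le ?_ hb2
        rw [frequently_atTop]
        intro b
        set N := b + ⌈ε⁻¹⌉₊ with hN
        obtain ⟨n, hn, hfn⟩ := (mem_L π N x).mp (hx N).2
        refine ⟨n, by omega, ?_⟩
        have h5 : ε⁻¹ ≤ (N:ℝ)+1 := by
          refine (Nat.le_ceil _).trans ?_
          have : (⌈ε⁻¹⌉₊ : ℝ) ≤ (N:ℝ) := by exact_mod_cast Nat.le_add_left _ _
          linarith
        have h6 : 1/((N:ℝ)+1) ≤ ε := by
          rw [div_le_iff₀ (by positivity)]
          calc (1:ℝ) = ε * ε⁻¹ := (mul_inv_cancel₀ hε.ne').symm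
            _ ≤ ε * ((N:ℝ)+1) := mul_le_mul_of_nonneg_left h5 hε.le
        linarith
      have := key ((Lv - (1:ℝ)/2)/2) (by linarith)
      linarith
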